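/- Let X be an m×n real matrix with strictly positive entries (m, n ≥ 1). Then there exists a pair (u, v) of vectors u ∈ ℝ^m, v ∈ ℝ^n with strictly positive entries such that (1/m)·Σ_{i=1}^m u_i² X_{i,j} v_j² = 1 for every j ∈ [n] and (1/n)·Σ_{j=1}^n u_i² X_{i,j} v_j² = 1 for every i ∈ [m]. Moreover, this pair is unique up to a positive scalar: if (u′, v′) is another pair of positive vectors satisfying the same equations, then there exists a > 0 with u′ = a·u and v′ = a^{-1}·v. -/

import Mathlib

open Finset

lemma key_uniq {m n : ℕ} (hm : 1 ≤ m) (hn : 1 ≤ n) (Y : Matrix (Fin m) (Fin n) ℝ)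
    (hY : ∀ i j, 0 < Y i j) (r : Fin m → ℝ) (c : Fin n → ℝ)
    (hr : ∀ i, 0 < r i) (hc : ∀ j, 0 < c j)
    (hrow : ∀ i, ∑ j, Y i j = n) (hcol : ∀ j, ∑ i, Y i j = m)
    (hrow' : ∀ i, ∑ j, Y i j * (r i * c j) = n)
    (hcol' : ∀ j, ∑ i, Y i j * (r i * c j) = m) :
    ∃ t : ℝ, 0 < t ∧ (∀ i, r i = t) ∧ (∀ j, c j = t⁻¹) := by
  have hn0 : (0:ℝ) < n := by exact_mod_cast hn
  obtain ⟨j0, -, hj0⟩ := Finset.exists_max_image (univ : Finset (Fin n)) c ⟨⟨0, hn⟩, mem_univ _⟩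
  -- step 1: ∀ i, 1 ≤ r i * c j0
  have hstep1 : ∀ i, 1 ≤ r i * c j0 := by
    intro i
    have h1 : (n:ℝ) ≤ (r i * c j0) * n := by
      calc (n:ℝ) = ∑ j, Y i j * (r i * c j) := (hrow' i).symm
        _ ≤ ∑ j, Y i j * (r i * c j0) := by
            apply Finset.sum_le_sum; intro j _
            have := mul_le_mul_of_nonneg_left (hj0 j (mem_univ j)) (hr i).le
            exact mul_le_mul_of_nonneg_left this (hY i j).le
        _ = (r i * c j0) * ∑ j, Y i j := by rw [Finset.mul_sum]; apply Finset.sum_congr rfl; intros; ring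
        _ = (r i * c j0) * n := by rw [hrow i]
    exact (le_mul_iff_one_le_left hn0).mp (by linarith)
  -- step 2: equality at column j0 forces r i * c j0 = 1 for all i
  have hstep2 : ∀ i, r i * c j0 = 1 := by
    have hle : ∀ i ∈ univ, Y i j0 ≤ Y i j0 * (r i * c j0) := fun i _ =>
      le_mul_of_one_le_right (hY i j0).le (hstep1 i)
    have hsum : ∑ i, Y i j0 = ∑ i, Y i j0 * (r i * c j0) := by rw [hcol j0, hcol' j0]
    have := (Finset.sum_eq_sum_iff_of_le hle).mp hsum
    intro i
    have h2 := (this i (mem_univ i)).symm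
    have : Y i j0 * (r i * c j0) = Y i j0 * 1 := by rw [mul_one]; exact h2
    exact mul_left_cancel₀ (hY i j0).ne' this
  -- step 3: all c j equal c j0
  have hstep3 : ∀ j, c j = c j0 := by
    intro j
    have i0 : Fin m := ⟨0, hm⟩
    have hle : ∀ j ∈ univ, Y i0 j * (r i0 * c j) ≤ Y i0 j * (r i0 * c j0) := by
      intro j _
      exact mul_le_mul_of_nonneg_left (mul_le_mul_of_nonneg_left (hj0 j (mem_univ j)) (hr i0).le) (hY i0 j).le
    have hsum : ∑ j, Y i0 j * (r i0 * c j) = ∑ j, Y i0 j * (r i0 * c j0) := by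
      rw [hrow' i0]
      have : ∑ j, Y i0 j * (r i0 * c j0) = (r i0 * c j0) * ∑ j, Y i0 j := by
        rw [Finset.mul_sum]; apply Finset.sum_congr rfl; intros; ring
      rw [this, hstep2 i0, one_mul, hrow i0]
    have := (Finset.sum_eq_sum_iff_of_le hle).mp hsum j (mem_univ j)
    have h3 : Y i0 j * (r i0 * c j) = Y i0 j * (r i0 * c j0) := this
    have := mul_left_cancel₀ (hY i0 j).ne' h3
    exact mul_left_cancel₀ (hr i0).ne' this
  refine ⟨(c j0)⁻¹, inv_pos.mpr (hc j0), fun i => ?_, fun j => ?_⟩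
  · exact eq_inv_of_mul_eq_one_left (hstep2 i)
  · rw [inv_inv]; exact hstep3 j

lemma exists_scaling {m n : ℕ} (hm : 1 ≤ m) (hn : 1 ≤ n)
    (X : Matrix (Fin m) (Fin n) ℝ) (hX : ∀ i j, 0 < X i j) :
    ∃ u : Fin m → ℝ, ∃ v : Fin n → ℝ,
      (∀ i, 0 < u i) ∧ (∀ j, 0 < v j) ∧
      (∀ j, (1 / (m : ℝ)) * ∑ i, (u i) ^ 2 * X i j * (v j) ^ 2 = 1) ∧
      (∀ i, (1 / (n : ℝ)) * ∑ j, (u i) ^ 2 * X i j * (v j) ^ 2 = 1) := by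
  have hm0 : (0:ℝ) < m := by exact_mod_cast hm
  have hn0 : (0:ℝ) < n := by exact_mod_cast hn
  -- minimum entry of X
  obtain ⟨p0, -, hxm⟩ := Finset.exists_min_image (univ : Finset (Fin m × Fin n))
    (fun p => X p.1 p.2) ⟨⟨⟨0, hm⟩, ⟨0, hn⟩⟩, mem_univ _⟩
  set xm : ℝ := X p0.1 p0.2 with hxmdef
  have hxm0 : 0 < xm := hX _ _
  have hxmle : ∀ i j, xm ≤ X i j := fun i j => hxm (i, j) (mem_univ _)
  -- the potential function
  set s : (Fin n → ℝ) → Fin m → ℝ := fun q i => ∑ j, X i j * q j with hs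
  set h : (Fin n → ℝ) → ℝ :=
    fun q => n * ∑ i, Real.log (s q i) - m * ∑ j, Real.log (q j) with hh
  set Q0 : Fin n → ℝ := fun _ => (n:ℝ)⁻¹ with hQ0
  set c0 : ℝ := h Q0 with hc0
  set L : ℝ := (n * m * Real.log xm - c0) / m with hL
  set δ : ℝ := min ((n:ℝ)⁻¹) (Real.exp L) with hδ
  have hδ0 : 0 < δ := lt_min (by positivity) (Real.exp_pos L)
  have hδn : δ ≤ (n:ℝ)⁻¹ := min_le_left _ _
  have hδL : Real.log δ ≤ L := by
    calc Real.log δ ≤ Real.log (Real.exp L) := Real.log_le_log hδ0 (min_le_right _ _)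
      _ = L := Real.log_exp L
  -- positivity of s on positive vectors
  have hspos : ∀ q : Fin n → ℝ, (∀ j, 0 < q j) → ∀ i, 0 < s q i := by
    intro q hq i
    exact Finset.sum_pos (fun j _ => mul_pos (hX i j) (hq j)) ⟨⟨0, hn⟩, mem_univ _⟩
  -- lower bound: for positive simplex vectors
  have hlb : ∀ q : Fin n → ℝ, (∀ j, 0 < q j) → (∑ j, q j = 1) → ∀ j1,
      (n:ℝ) * m * Real.log xm - m * Real.log (q j1) ≤ h q := by
    intro q hq hqs j1
    have hqle1 : ∀ j, q j ≤ 1 := by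
      intro j
      rw [← hqs]
      exact Finset.single_le_sum (fun j _ => (hq j).le) (mem_univ j)
    have h1 : ∀ i, xm ≤ s q i := by
      intro i
      calc xm = xm * ∑ j, q j := by rw [hqs, mul_one]
        _ = ∑ j, xm * q j := by rw [Finset.mul_sum]
        _ ≤ ∑ j, X i j * q j := Finset.sum_le_sum fun j _ =>
            mul_le_mul_of_nonneg_right (hxmle i j) (hq j).le
        _ = s q i := rfl
    have h2 : (m:ℝ) * Real.log xm ≤ ∑ i, Real.log (s q i) := by
      calc (m:ℝ) * Real.log xm = ∑ _i : Fin m, Real.log xm := by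
            rw [Finset.sum_const, card_univ, Fintype.card_fin]; ring
        _ ≤ ∑ i, Real.log (s q i) := Finset.sum_le_sum fun i _ =>
            Real.log_le_log hxm0 (h1 i)
    have h3 : ∑ j, Real.log (q j) ≤ Real.log (q j1) := by
      calc ∑ j, Real.log (q j) ≤ ∑ j, (if j = j1 then Real.log (q j1) else 0) := by
            apply Finset.sum_le_sum
            intro j _
            by_cases hj : j = j1
            · simp [hj]
            · simp only [hj, if_false]
              exact Real.log_nonpos (hq j).le (hqle1 j)
        _ = Real.log (q j1) := by simp
    have h4 : (n:ℝ) * ((m:ℝ) * Real.log xm) ≤ n * ∑ i, Real.log (s q i) :=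
      mul_le_mul_of_nonneg_left h2 hn0.le
    have h5 : (m:ℝ) * ∑ j, Real.log (q j) ≤ m * Real.log (q j1) :=
      mul_le_mul_of_nonneg_left h3 hm0.le
    simp only [hh]
    nlinarith [h4, h5]
  -- the compact set K
  set K : Set (Fin n → ℝ) := {q | (∀ j, δ ≤ q j) ∧ ∑ j, q j = 1} with hK
  have hQ0K : Q0 ∈ K := by
    constructor
    · intro j; exact hδn
    · simp [hQ0, Finset.sum_const, card_univ]
      field_simp
  have hKcompact : IsCompact K := by
    have hsub : K ⊆ Set.pi Set.univ (fun _ : Fin n => Set.Icc δ 1) := by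
      rintro p ⟨h1, h2⟩ j -
      refine ⟨h1 j, ?_⟩
      rw [← h2]
      exact Finset.single_le_sum (fun l _ => le_trans hδ0.le (h1 l)) (mem_univ j)
    have hclosed : IsClosed K := by
      have h1 : IsClosed {p : Fin n → ℝ | ∀ j, δ ≤ p j} := by
        have : {p : Fin n → ℝ | ∀ j, δ ≤ p j} = ⋂ j, {p : Fin n → ℝ | δ ≤ p j} := by
          ext p; simp
        rw [this]
        exact isClosed_iInter fun j => isClosed_le continuous_const (continuous_apply j)
      have h2 : IsClosed {p : Fin n → ℝ | ∑ j, p j = 1} :=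
        isClosed_eq (continuous_finset_sum univ fun j _ => continuous_apply j) continuous_const
      exact h1.inter h2
    exact (isCompact_univ_pi fun _ => isCompact_Icc).of_isClosed_subset hclosed hsub
  have hKcont : ContinuousOn h K := by
    apply ContinuousOn.sub
    · apply ContinuousOn.mul continuousOn_const
      apply continuousOn_finset_sum
      intro i _
      apply ContinuousOn.log
      · exact (continuous_finset_sum univ fun j _ =>
          continuous_const.mul (continuous_apply j)).continuousOn
      · intro p hpK
        exact (hspos p (fun j => lt_of_lt_of_le hδ0 (hpK.1 j)) i).ne'
    · apply ContinuousOn.mul continuousOn_const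
      apply continuousOn_finset_sum
      intro j _
      exact ContinuousOn.log (continuous_apply j).continuousOn
        (fun p hpK => (lt_of_lt_of_le hδ0 (hpK.1 j)).ne')
  obtain ⟨q, hqK, hqmin⟩ := hKcompact.exists_isMinOn ⟨Q0, hQ0K⟩ hKcont
  have hqδ : ∀ j, δ ≤ q j := hqK.1
  have hqs1 : ∑ j, q j = 1 := hqK.2
  have hqpos : ∀ j, 0 < q j := fun j => lt_of_lt_of_le hδ0 (hqδ j)
  have hqc0 : h q ≤ c0 := hqmin hQ0K
  -- q is a global min over the positive simplex
  have hgmin : ∀ p : Fin n → ℝ, (∀ j, 0 < p j) → (∑ j, p j = 1) → h q ≤ h p := by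
    intro p hp hps
    by_cases hpK : ∀ j, δ ≤ p j
    · exact hqmin ⟨hpK, hps⟩
    · push_neg at hpK
      obtain ⟨j1, hj1⟩ := hpK
      have h1 := hlb p hp hps j1
      have h2 : Real.log (p j1) < Real.log δ := Real.log_lt_log (hp j1) hj1
      have h3 : (m:ℝ) * L = n * m * Real.log xm - c0 := by
        rw [hL]; field_simp
      have h4 : m * Real.log (p j1) < m * L :=
        lt_of_lt_of_le (mul_lt_mul_of_pos_left h2 hm0) (mul_le_mul_of_nonneg_left hδL hm0.le)
      linarith
  -- critical point conditions
  set si : Fin m → ℝ := fun i => s q i with hsi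
  have hsipos : ∀ i, 0 < si i := hspos q hqpos
  set g : Fin n → ℝ := fun j => n * ∑ i, X i j / si i - m / q j with hg
  set k0 : Fin n := ⟨0, hn⟩ with hk0
  have hgall : ∀ j, g j = g k0 := by
    intro j
    set d : Fin n → ℝ := fun l => (if l = j then (1:ℝ) else 0) - (if l = k0 then 1 else 0) with hd
    set w : Fin m → ℝ := fun i => X i j - X i k0 with hw
    have hdb : ∀ l, |d l| ≤ 1 := by
      intro l
      simp only [hd]
      split_ifs <;> norm_num
    have hdsum : ∑ l, d l = 0 := by simp [hd, Finset.sum_sub_distrib]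
    have hXd : ∀ i, ∑ l, X i l * d l = w i := by
      intro i
      simp only [hd, hw, mul_sub, Finset.sum_sub_distrib, mul_ite, mul_one, mul_zero,
        Finset.sum_ite_eq', mem_univ, if_true]
    have hsd : ∀ (t : ℝ) i, s (fun l => q l + t * d l) i = si i + t * w i := by
      intro t i
      simp only [hs, hsi, mul_add, Finset.sum_add_distrib]
      congr 1
      rw [← hXd i, Finset.mul_sum]
      apply Finset.sum_congr rfl
      intros; ring
    set φ : ℝ → ℝ :=
      fun t => n * ∑ i, Real.log (si i + t * w i) - m * ∑ l, Real.log (q l + t * d l) with hφ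
    have hφeq : ∀ t, φ t = h (fun l => q l + t * d l) := by
      intro t
      simp only [hφ, hh]
      congr 2
      apply Finset.sum_congr rfl
      intro i _
      rw [hsd t i]
    have hmem : ∀ t : ℝ, |t| < δ →
        (∀ l, 0 < q l + t * d l) ∧ (∑ l, (q l + t * d l) = 1) := by
      intro t ht
      constructor
      · intro l
        have h1 : |t * d l| ≤ |t| := by
          rw [abs_mul]
          calc |t| * |d l| ≤ |t| * 1 := mul_le_mul_of_nonneg_left (hdb l) (abs_nonneg t)
            _ = |t| := mul_one _
        have h2 := neg_abs_le (t * d l)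
        have h3 := hqδ l
        linarith
      · rw [Finset.sum_add_distrib, hqs1, ← Finset.mul_sum, hdsum, mul_zero, add_zero]
    have hloc : IsLocalMin φ 0 := by
      rw [IsLocalMin, IsMinFilter, Metric.eventually_nhds_iff]
      refine ⟨δ, hδ0, fun t ht => ?_⟩
      rw [Real.dist_eq, sub_zero] at ht
      obtain ⟨h1, h2⟩ := hmem t ht
      have h0 : φ 0 = h q := by
        rw [hφeq 0]
        simp only [zero_mul, add_zero]
      rw [h0, hφeq]
      exact hgmin _ h1 h2
    have hdl : ∀ (a b : ℝ), 0 < a →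
        HasDerivAt (fun t : ℝ => Real.log (a + t * b)) (b / a) 0 := by
      intro a b ha
      have h1 : HasDerivAt (fun t : ℝ => a + t * b) b 0 := by
        simpa using ((hasDerivAt_id (0:ℝ)).mul_const b).const_add a
      have h2 := h1.log (by simpa using ha.ne')
      simpa using h2
    have hder1 : HasDerivAt (fun t => ∑ i, Real.log (si i + t * w i)) (∑ i, w i / si i) 0 :=
      HasDerivAt.fun_sum fun i _ => hdl (si i) (w i) (hsipos i)
    have hder2 : HasDerivAt (fun t => ∑ l, Real.log (q l + t * d l)) (∑ l, d l / q l) 0 :=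
      HasDerivAt.fun_sum fun l _ => hdl (q l) (d l) (hqpos l)
    have hderφ : HasDerivAt φ ((n:ℝ) * ∑ i, w i / si i - (m:ℝ) * ∑ l, d l / q l) 0 :=
      (hder1.const_mul (n:ℝ)).sub (hder2.const_mul (m:ℝ))
    have hval : (n:ℝ) * ∑ i, w i / si i - (m:ℝ) * ∑ l, d l / q l = 0 := by
      rw [← hderφ.deriv]
      exact hloc.deriv_eq_zero
    have hw1 : ∑ i, w i / si i = ∑ i, X i j / si i - ∑ i, X i k0 / si i := by
      simp only [hw, sub_div, Finset.sum_sub_distrib]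
    have hd1 : ∑ l, d l / q l = 1 / q j - 1 / q k0 := by
      simp only [hd, sub_div, Finset.sum_sub_distrib, ite_div, zero_div,
        Finset.sum_ite_eq', mem_univ, if_true]
    rw [hw1, hd1] at hval
    simp only [hg]
    have e1 : (m:ℝ) / q j = m * (1 / q j) := by ring
    have e2 : (m:ℝ) / q k0 = m * (1 / q k0) := by ring
    rw [e1, e2]
    ring_nf
    ring_nf at hval
    linarith
  have hbal : ∀ j, (n:ℝ) * ∑ i, X i j / si i = m / q j := by
    have h1 : ∑ j, q j * g j = g k0 := by
      rw [Finset.sum_congr rfl (fun j _ => by rw [hgall j]), ← Finset.sum_mul, hqs1, one_mul]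
    have e2 : ∑ j, ((n:ℝ) * ∑ i, X i j * q j / si i) = (n:ℝ) * (m:ℝ) := by
      rw [← Finset.mul_sum, Finset.sum_comm]
      have e3 : ∀ i, ∑ j, X i j * q j / si i = 1 := by
        intro i
        rw [← Finset.sum_div]
        exact div_self (hsipos i).ne'
      rw [Finset.sum_congr rfl fun i _ => e3 i]
      simp [Finset.sum_const, card_univ]
    have h2 : ∑ j, q j * g j = 0 := by
      have e1 : ∀ j, q j * g j = (n:ℝ) * ∑ i, X i j * q j / si i - m := by
        intro j
        simp only [hg]
        rw [mul_sub]
        congr 1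
        · simp only [Finset.mul_sum]
          exact Finset.sum_congr rfl fun i _ => by ring
        · field_simp
          exact div_self (hqpos j).ne'
      calc ∑ j, q j * g j
          = ∑ j, ((n:ℝ) * ∑ i, X i j * q j / si i) - ∑ _j : Fin n, (m:ℝ) := by
            rw [← Finset.sum_sub_distrib]
            exact Finset.sum_congr rfl fun j _ => e1 j
        _ = (n:ℝ) * (m:ℝ) - (n:ℝ) * (m:ℝ) := by
            rw [e2]
            congr 1
            rw [Finset.sum_const, card_univ, Fintype.card_fin, nsmul_eq_mul]
        _ = 0 := sub_self _
    have hlam0 : g k0 = 0 := by rw [← h1, h2]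
    intro j
    have hgj : g j = 0 := by rw [hgall j, hlam0]
    simp only [hg] at hgj
    linarith
  -- assemble solution
  refine ⟨fun i => Real.sqrt ((n:ℝ) / si i), fun j => Real.sqrt (q j), ?_, ?_, ?_, ?_⟩
  · intro i; exact Real.sqrt_pos.mpr (div_pos hn0 (hsipos i))
  · intro j; exact Real.sqrt_pos.mpr (hqpos j)
  · intro j
    have hsum : ∑ i, Real.sqrt ((n:ℝ)/si i) ^ 2 * X i j * Real.sqrt (q j) ^ 2 = (m:ℝ) := by
      have e : ∀ i, Real.sqrt ((n:ℝ)/si i) ^ 2 * X i j * Real.sqrt (q j) ^ 2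
          = q j * ((n:ℝ) * (X i j / si i)) := by
        intro i
        rw [Real.sq_sqrt (div_pos hn0 (hsipos i)).le, Real.sq_sqrt (hqpos j).le]
        ring
      rw [Finset.sum_congr rfl fun i _ => e i, ← Finset.mul_sum, ← Finset.mul_sum, hbal j]
      field_simp
      exact div_self (hqpos j).ne'
    rw [hsum]
    field_simp
  · intro i
    have hsum : ∑ j, Real.sqrt ((n:ℝ)/si i) ^ 2 * X i j * Real.sqrt (q j) ^ 2 = (n:ℝ) := by
      have e : ∀ j, Real.sqrt ((n:ℝ)/si i) ^ 2 * X i j * Real.sqrt (q j) ^ 2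
          = ((n:ℝ) / si i) * (X i j * q j) := by
        intro j
        rw [Real.sq_sqrt (div_pos hn0 (hsipos i)).le, Real.sq_sqrt (hqpos j).le]
        ring
      rw [Finset.sum_congr rfl fun j _ => e j, ← Finset.mul_sum]
      have hsii : ∑ j, X i j * q j = si i := rfl
      rw [hsii]
      field_simp
      exact div_self (hsipos i).ne'
    rw [hsum]
    field_simp


/-- **Existence and uniqueness of the exact scaling factors (u, v).**
For a strictly positive `m × n` matrix `X`, there exists a pair of strictly positive
vectors `u ∈ ℝ^m`, `v ∈ ℝ^n` such that
`(1/m) ∑_i u_i² X_{i,j} v_j² = 1` for all `j` and `(1/n) ∑_j u_i² X_{i,j} v_j² = 1` for all `i`,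
and this pair is unique up to replacing `(u, v)` by `(a·u, a⁻¹·v)` for some `a > 0`. -/
theorem stmt0 (m n : ℕ) (hm : 1 ≤ m) (hn : 1 ≤ n)
    (X : Matrix (Fin m) (Fin n) ℝ) (hX : ∀ i j, 0 < X i j) :
    ∃ u : Fin m → ℝ, ∃ v : Fin n → ℝ,
      (∀ i, 0 < u i) ∧ (∀ j, 0 < v j) ∧
      (∀ j, (1 / (m : ℝ)) * ∑ i, (u i) ^ 2 * X i j * (v j) ^ 2 = 1) ∧
      (∀ i, (1 / (n : ℝ)) * ∑ j, (u i) ^ 2 * X i j * (v j) ^ 2 = 1) ∧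
      (∀ u' : Fin m → ℝ, ∀ v' : Fin n → ℝ,
        (∀ i, 0 < u' i) → (∀ j, 0 < v' j) →
        (∀ j, (1 / (m : ℝ)) * ∑ i, (u' i) ^ 2 * X i j * (v' j) ^ 2 = 1) →
        (∀ i, (1 / (n : ℝ)) * ∑ j, (u' i) ^ 2 * X i j * (v' j) ^ 2 = 1) →
        ∃ a : ℝ, 0 < a ∧ u' = (fun i => a * u i) ∧ v' = (fun j => a⁻¹ * v j)) := by
  obtain ⟨u, v, hu, hv, hcol, hrow⟩ := exists_scaling hm hn X hX
  refine ⟨u, v, hu, hv, hcol, hrow, ?_⟩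
  intro u' v' hu' hv' hcol' hrow'
  have hm0 : (0:ℝ) < m := by exact_mod_cast hm
  have hn0 : (0:ℝ) < n := by exact_mod_cast hn
  set Y : Matrix (Fin m) (Fin n) ℝ := fun i j => u i ^ 2 * X i j * v j ^ 2 with hY
  have hYpos : ∀ i j, 0 < Y i j := fun i j =>
    mul_pos (mul_pos (pow_pos (hu i) 2) (hX i j)) (pow_pos (hv j) 2)
  set r : Fin m → ℝ := fun i => u' i ^ 2 / u i ^ 2 with hr
  set c : Fin n → ℝ := fun j => v' j ^ 2 / v j ^ 2 with hc
  have hrpos : ∀ i, 0 < r i := fun i => div_pos (pow_pos (hu' i) 2) (pow_pos (hu i) 2)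
  have hcpos : ∀ j, 0 < c j := fun j => div_pos (pow_pos (hv' j) 2) (pow_pos (hv j) 2)
  have hsimp : ∀ (S : ℝ) (k : ℝ), 0 < k → (1 / k) * S = 1 → S = k := by
    intro S k hk hSk
    field_simp at hSk
    linarith
  have hYrc : ∀ i j, Y i j * (r i * c j) = u' i ^ 2 * X i j * v' j ^ 2 := by
    intro i j
    simp only [hY, hr, hc]
    have h2 : u i ^ 2 * X i j * v j ^ 2 * (u' i ^ 2 / u i ^ 2 * (v' j ^ 2 / v j ^ 2))
        = (u' i ^ 2 * X i j * v' j ^ 2) * ((u i ^ 2 / u i ^ 2) * (v j ^ 2 / v j ^ 2)) := by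
      ring
    rw [h2, div_self (pow_ne_zero 2 (hu i).ne'), div_self (pow_ne_zero 2 (hv j).ne'),
      one_mul, mul_one]
  have hrow0 : ∀ i, ∑ j, Y i j = n := fun i => hsimp _ _ hn0 (hrow i)
  have hcol0 : ∀ j, ∑ i, Y i j = m := fun j => hsimp _ _ hm0 (hcol j)
  have hrow1 : ∀ i, ∑ j, Y i j * (r i * c j) = n := by
    intro i
    rw [Finset.sum_congr rfl fun j _ => hYrc i j]
    exact hsimp _ _ hn0 (hrow' i)
  have hcol1 : ∀ j, ∑ i, Y i j * (r i * c j) = m := by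
    intro j
    rw [Finset.sum_congr rfl fun i _ => hYrc i j]
    exact hsimp _ _ hm0 (hcol' j)
  obtain ⟨t, ht, hrt, hct⟩ := key_uniq hm hn Y hYpos r c hrpos hcpos hrow0 hcol0 hrow1 hcol1
  refine ⟨Real.sqrt t, Real.sqrt_pos.mpr ht, ?_, ?_⟩
  · funext i
    have h1 : u' i ^ 2 = t * u i ^ 2 := by
      have h2 := hrt i
      simp only [hr] at h2
      rw [div_eq_iff (pow_ne_zero 2 (hu i).ne')] at h2
      linarith
    calc u' i = Real.sqrt (u' i ^ 2) := (Real.sqrt_sq (hu' i).le).symm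
      _ = Real.sqrt ((Real.sqrt t * u i) ^ 2) := by
          rw [h1, mul_pow, Real.sq_sqrt ht.le]
      _ = Real.sqrt t * u i := Real.sqrt_sq (mul_nonneg (Real.sqrt_nonneg t) (hu i).le)
  · funext j
    have h1 : v' j ^ 2 = t⁻¹ * v j ^ 2 := by
      have h2 := hct j
      simp only [hc] at h2
      rw [div_eq_iff (pow_ne_zero 2 (hv j).ne')] at h2
      linarith
    calc v' j = Real.sqrt (v' j ^ 2) := (Real.sqrt_sq (hv' j).le).symm
      _ = Real.sqrt (((Real.sqrt t)⁻¹ * v j) ^ 2) := by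
          rw [h1, mul_pow, inv_pow, Real.sq_sqrt ht.le]
      _ = (Real.sqrt t)⁻¹ * v j :=
          Real.sqrt_sq (mul_nonneg (inv_nonneg.mpr (Real.sqrt_nonneg t)) (hv j).le)
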